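/- arXiv:2010.07918 — 4 statements merged into one kernel-verified Lean document; each statement's English description precedes it below -/
import Mathlib

section
/- For every n_0 ∈ ℕ, 𝐧 = (n_1,…,n_r) ∈ ℕ^r and every m ∈ ℕ, the level set of Γ_{n_0,𝐧} decomposes as a Minkowski sum: π_1([Γ_{n_0,𝐧}]_m) = π_1([Γ_{n_0,𝟎}]_m) + π_1([Γ_{0,n_1𝐞_1}]_m) + ⋯ + π_1([Γ_{0,n_r𝐞_r}]_m), where the sums on the right are Minkowski sums of finite subsets of ℕ^d. -/
open Filter MvPolynomial Pointwise MeasureTheory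

noncomputable section

/-- The graded irrelevant (maximal graded) ideal `𝔪 = (x_1, …, x_d)` of `𝕜[x_1, …, x_d]`. -/
def mId (𝕜 : Type*) [Field 𝕜] (d : ℕ) : Ideal (MvPolynomial (Fin d) 𝕜) :=
  Ideal.span (Set.range MvPolynomial.X)

/-- A graded family of ideals: `I 0 = R` and `I i * I j ⊆ I (i + j)`. -/
def IsGradedFamily {R : Type*} [CommSemiring R] (I : ℕ → Ideal R) : Prop :=
  I 0 = ⊤ ∧ ∀ i j : ℕ, I i * I j ≤ I (i + j)

/-- An `𝔪`-primary ideal of the polynomial ring: a proper ideal containing a power of `𝔪`. -/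
def IsMPrimary {𝕜 : Type*} [Field 𝕜] {d : ℕ} (I : Ideal (MvPolynomial (Fin d) 𝕜)) : Prop :=
  I ≠ ⊤ ∧ ∃ k : ℕ, mId 𝕜 d ^ k ≤ I

/-- A monomial ideal: an ideal generated by monomials. -/
def IsMonomialIdeal {𝕜 : Type*} [Field 𝕜] {d : ℕ} (I : Ideal (MvPolynomial (Fin d) 𝕜)) : Prop :=
  ∃ S : Set (Fin d →₀ ℕ), I = Ideal.span ((fun m => MvPolynomial.monomial m (1 : 𝕜)) '' S)

/-- A nonzero monomial ideal generated by monomials of degree at most `b`;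
for nonzero monomial ideals this is exactly the condition `β(I) ≤ b`. -/
def IsMonomialBounded {𝕜 : Type*} [Field 𝕜] {d : ℕ} (I : Ideal (MvPolynomial (Fin d) 𝕜))
    (b : ℕ) : Prop :=
  I ≠ ⊥ ∧ ∃ S : Set (Fin d →₀ ℕ), (∀ m ∈ S, (∑ j, m j) ≤ b) ∧
    I = Ideal.span ((fun m => MvPolynomial.monomial m (1 : 𝕜)) '' S)

/-- The `𝕜`-vector space dimension of the quotient `A / (A ⊓ B)`; for `B ⊆ A`
this is `dim_𝕜 (A / B)`. -/
def quotDim (𝕜 : Type*) [Field 𝕜] {R : Type*} [CommRing R] [Algebra 𝕜 R]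
    (A B : Ideal R) : ℕ :=
  Module.finrank 𝕜
    (↥(Submodule.restrictScalars 𝕜 A) ⧸
      Submodule.comap (Submodule.restrictScalars 𝕜 A).subtype (Submodule.restrictScalars 𝕜 B))

/-- The semigroup `Γ_{n₀,𝐧} = {(𝐦,m) ∈ ℕ^d × ℕ : x^𝐦 ∈ 𝐉_{m𝐧}, |𝐦| ≤ c m (n₀+|𝐧|)}`. -/
def GammaSet (𝕜 : Type*) [Field 𝕜] {d r : ℕ}
    (J : Fin r → ℕ → Ideal (MvPolynomial (Fin d) 𝕜)) (c n0 : ℕ) (n : Fin r → ℕ) :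
    Set ((Fin d →₀ ℕ) × ℕ) :=
  {q | MvPolynomial.monomial q.1 (1 : 𝕜) ∈ ∏ i, J i (q.2 * n i) ∧
    (∑ j, q.1 j) ≤ c * q.2 * (n0 + ∑ i, n i)}

/-- The semigroup `Γ̂_{n₀,𝐧} = {(𝐦,m) : x^𝐦 ∈ I_{m n₀}𝐉_{m𝐧}, |𝐦| ≤ c m (n₀+|𝐧|)}`. -/
def GammaHatSet (𝕜 : Type*) [Field 𝕜] {d r : ℕ}
    (I : ℕ → Ideal (MvPolynomial (Fin d) 𝕜))
    (J : Fin r → ℕ → Ideal (MvPolynomial (Fin d) 𝕜)) (c n0 : ℕ) (n : Fin r → ℕ) :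
    Set ((Fin d →₀ ℕ) × ℕ) :=
  {q | MvPolynomial.monomial q.1 (1 : 𝕜) ∈ I (q.2 * n0) * ∏ i, J i (q.2 * n i) ∧
    (∑ j, q.1 j) ≤ c * q.2 * (n0 + ∑ i, n i)}

/-- The level set `π₁([S]_m)` of a subset `S ⊆ ℕ^d × ℕ`. -/
def levelSet {d : ℕ} (S : Set ((Fin d →₀ ℕ) × ℕ)) (m : ℕ) : Set (Fin d →₀ ℕ) :=
  {q | (q, m) ∈ S}

/-- The embedding `ℕ^d × ℕ → ℝ^d × ℝ`. -/
def embedReal {d : ℕ} (q : (Fin d →₀ ℕ) × ℕ) : (Fin d → ℝ) × ℝ :=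
  ((fun j => (q.1 j : ℝ)), (q.2 : ℝ))

/-- `Con(S)`: the closure of the set of all non-negative real linear combinations of
elements of `S ⊆ ℝ^d × ℝ`. -/
def coneOf {d : ℕ} (S : Set ((Fin d → ℝ) × ℝ)) : Set ((Fin d → ℝ) × ℝ) :=
  closure {x | ∃ (k : ℕ) (a : Fin k → ℝ) (v : Fin k → (Fin d → ℝ) × ℝ),
    (∀ j, 0 ≤ a j) ∧ (∀ j, v j ∈ S) ∧ x = ∑ j, a j • v j}

/-- The Newton–Okounkov body `Δ(S) = Con(S) ∩ π^{-1}(1)` of `S ⊆ ℕ^d × ℕ`,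
where `π` is the projection to the last coordinate. -/
def newtonBody {d : ℕ} (S : Set ((Fin d →₀ ℕ) × ℕ)) : Set ((Fin d → ℝ) × ℝ) :=
  {x | x ∈ coneOf (embedReal '' S) ∧ x.2 = 1}

/-- `Vol_d(Δ(S))`: the `d`-dimensional Lebesgue volume of `π₁(Δ(S))`. -/
def volDelta {d : ℕ} (S : Set ((Fin d →₀ ℕ) × ℕ)) : ℝ :=
  (MeasureTheory.volume (Prod.fst '' newtonBody S)).toReal


section AuxSeven

open MvPolynomial Pointwise

variable {d : ℕ}

/-- Total degree of an exponent vector. -/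
def fdeg (q : Fin d →₀ ℕ) : ℕ := ∑ j, q j

lemma fdeg_add (a b : Fin d →₀ ℕ) : fdeg (a + b) = fdeg a + fdeg b := by
  simp [fdeg, Finset.sum_add_distrib]

lemma fdeg_zero : fdeg (0 : Fin d →₀ ℕ) = 0 := by simp [fdeg]

lemma fdeg_le_zero {q : Fin d →₀ ℕ} (h : fdeg q ≤ 0) : q = 0 := by
  have h0 : ∑ j, q j = 0 := Nat.le_zero.mp h
  ext a
  exact (Finset.sum_eq_zero_iff.mp h0) a (Finset.mem_univ a)

lemma fdeg_single (j : Fin d) : fdeg (Finsupp.single j 1) = 1 := by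
  simp [fdeg, Finsupp.single_apply]

lemma piece (b : Fin d →₀ ℕ) : ∀ k, k ≤ fdeg b →
    ∃ b₀ b₁ : Fin d →₀ ℕ, b₀ + b₁ = b ∧ fdeg b₀ = k := by
  intro k
  induction k with
  | zero => intro _; exact ⟨0, b, zero_add b, fdeg_zero⟩
  | succ k ih =>
    intro hk
    obtain ⟨b₀, b₁, hb, hd0⟩ := ih (Nat.le_of_succ_le hk)
    have hdb : fdeg b = k + fdeg b₁ := by rw [← hb, fdeg_add, hd0]
    have h1 : 1 ≤ fdeg b₁ := by omega
    have hex : ∃ j : Fin d, b₁ j ≠ 0 := by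
      by_contra h
      push_neg at h
      have : fdeg b₁ = 0 := by simp [fdeg, h]
      omega
    obtain ⟨j, hj⟩ := hex
    refine ⟨b₀ + Finsupp.single j 1, b₁ - Finsupp.single j 1, ?_, ?_⟩
    · ext a
      have hba : b₀ a + b₁ a = b a := by rw [← hb]; simp
      by_cases hja : j = a
      · subst hja
        simp only [Finsupp.add_apply, Finsupp.tsub_apply, Finsupp.single_eq_same]
        omega
      · simp only [Finsupp.add_apply, Finsupp.tsub_apply,
          Finsupp.single_eq_of_ne' hja]
        omega
    · rw [fdeg_add, hd0, fdeg_single]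

lemma fsplit (b : Fin d →₀ ℕ) (A B : ℕ) (h : fdeg b ≤ A + B) :
    ∃ b₀ b₁, b₀ + b₁ = b ∧ fdeg b₀ ≤ A ∧ fdeg b₁ ≤ B := by
  by_cases hA : fdeg b ≤ A
  · exact ⟨b, 0, add_zero b, hA, by simp [fdeg_zero]⟩
  · obtain ⟨b₀, b₁, hb, hd0⟩ := piece b A (by omega)
    refine ⟨b₀, b₁, hb, le_of_eq hd0, ?_⟩
    have hh := fdeg_add b₀ b₁
    rw [hb] at hh
    omega

/-- Truncated up-set generated by `T`, with degree bound `N`. -/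
def DSet (T : Set (Fin d →₀ ℕ)) (N : ℕ) : Set (Fin d →₀ ℕ) :=
  {q | (∃ t ∈ T, t ≤ q) ∧ fdeg q ≤ N}

lemma DSet_add (T₀ T₁ : Set (Fin d →₀ ℕ)) (N₀ N₁ : ℕ)
    (h₀ : ∀ t ∈ T₀, fdeg t ≤ N₀) (h₁ : ∀ t ∈ T₁, fdeg t ≤ N₁) :
    DSet T₀ N₀ + DSet T₁ N₁ = DSet (T₀ + T₁) (N₀ + N₁) := by
  ext q
  constructor
  · rintro ⟨q₀, ⟨⟨t₀, ht₀, hle₀⟩, hd₀⟩, q₁, ⟨⟨t₁, ht₁, hle₁⟩, hd₁⟩, rfl⟩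
    exact ⟨⟨t₀ + t₁, Set.add_mem_add ht₀ ht₁, add_le_add hle₀ hle₁⟩,
      by rw [fdeg_add]; omega⟩
  · rintro ⟨⟨t, ht, hle⟩, hdq⟩
    obtain ⟨t₀, ht₀, t₁, ht₁, rfl⟩ := Set.mem_add.mp ht
    set b := q - (t₀ + t₁) with hbdef
    have hq : t₀ + t₁ + b = q := by
      ext a
      have hle' := Finsupp.le_def.mp hle a
      simp only [hbdef, Finsupp.add_apply, Finsupp.tsub_apply] at *
      omega
    have hdq' : fdeg q = fdeg t₀ + fdeg t₁ + fdeg b := by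
      rw [← hq, fdeg_add, fdeg_add]
    have hb₀ := h₀ t₀ ht₀
    have hb₁ := h₁ t₁ ht₁
    obtain ⟨b₀, b₁, hb, hA, hB⟩ := fsplit b (N₀ - fdeg t₀) (N₁ - fdeg t₁) (by omega)
    refine Set.mem_add.mpr ⟨t₀ + b₀,
      ⟨⟨t₀, ht₀, self_le_add_right _ _⟩, by rw [fdeg_add]; omega⟩,
      t₁ + b₁,
      ⟨⟨t₁, ht₁, self_le_add_right _ _⟩, by rw [fdeg_add]; omega⟩, ?_⟩
    rw [← hq, ← hb]
    abel

lemma DSet_sum {ι : Type*} [DecidableEq ι] (t : Finset ι)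
    (T : ι → Set (Fin d →₀ ℕ)) (N : ι → ℕ)
    (h : ∀ i ∈ t, (∀ x ∈ T i, fdeg x ≤ N i) ∧ (T i).Nonempty) :
    (∑ i ∈ t, DSet (T i) (N i) = DSet (∑ i ∈ t, T i) (∑ i ∈ t, N i)) ∧
    (∀ x ∈ ∑ i ∈ t, T i, fdeg x ≤ ∑ i ∈ t, N i) ∧ (∑ i ∈ t, T i).Nonempty := by
  induction t using Finset.induction_on with
  | empty =>
    refine ⟨?_, ?_, ⟨0, Set.mem_zero.mpr rfl⟩⟩
    · simp only [Finset.sum_empty]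
      ext q
      constructor
      · intro hq
        rw [Set.mem_zero] at hq
        subst hq
        exact ⟨⟨0, Set.mem_zero.mpr rfl, le_rfl⟩, by simp [fdeg_zero]⟩
      · rintro ⟨-, hdq⟩
        rw [Set.mem_zero]
        exact fdeg_le_zero hdq
    · intro x hx
      simp only [Finset.sum_empty] at hx ⊢
      rw [Set.mem_zero] at hx
      subst hx
      simp [fdeg_zero]
  | insert i s hi ih =>
    obtain ⟨heq, hbdd, hne⟩ := ih (fun j hj => h j (Finset.mem_insert_of_mem hj))
    have hii := h i (Finset.mem_insert_self i s)
    constructor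
    · rw [Finset.sum_insert hi, Finset.sum_insert hi, Finset.sum_insert hi, heq,
        DSet_add _ _ _ _ hii.1 hbdd]
    · constructor
      · intro x hx
        rw [Finset.sum_insert hi] at hx
        obtain ⟨x₀, hx₀, x₁, hx₁, rfl⟩ := Set.mem_add.mp hx
        rw [Finset.sum_insert hi, fdeg_add]
        exact add_le_add (hii.1 x₀ hx₀) (hbdd x₁ hx₁)
      · rw [Finset.sum_insert hi]
        obtain ⟨x, hx⟩ := hii.2
        obtain ⟨y, hy⟩ := hne
        exact ⟨x + y, Set.add_mem_add hx hy⟩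

variable {𝕜 : Type*} [Field 𝕜]

lemma image_mon_add (S T : Set (Fin d →₀ ℕ)) :
    ((fun m => monomial m (1 : 𝕜)) '' (S + T)) =
      ((fun m => monomial m (1 : 𝕜)) '' S) * ((fun m => monomial m (1 : 𝕜)) '' T) := by
  ext p
  constructor
  · rintro ⟨x, hx, rfl⟩
    obtain ⟨a, ha, b, hb, rfl⟩ := Set.mem_add.mp hx
    show (monomial (a + b) (1 : 𝕜)) ∈ _
    rw [show (monomial (a + b) (1 : 𝕜)) = monomial a 1 * monomial b 1 by
      rw [monomial_mul, one_mul]]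
    exact Set.mul_mem_mul ⟨a, ha, rfl⟩ ⟨b, hb, rfl⟩
  · intro hp
    obtain ⟨pa, ⟨a, ha, rfl⟩, pb, ⟨b, hb, rfl⟩, rfl⟩ := Set.mem_mul.mp hp
    exact ⟨a + b, Set.add_mem_add ha hb, by rw [monomial_mul, one_mul]⟩

lemma prod_span_mon {ι : Type*} [DecidableEq ι] (t : Finset ι)
    (S : ι → Set (Fin d →₀ ℕ)) :
    (∏ i ∈ t, Ideal.span ((fun m => monomial m (1 : 𝕜)) '' S i)) =
      Ideal.span ((fun m => monomial m (1 : 𝕜)) '' (∑ i ∈ t, S i)) := by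
  induction t using Finset.induction_on with
  | empty =>
    simp only [Finset.prod_empty, Finset.sum_empty]
    have h1 : ((fun m => monomial m (1 : 𝕜)) '' (0 : Set (Fin d →₀ ℕ))) = {1} := by
      have : (0 : Set (Fin d →₀ ℕ)) = {0} := rfl
      rw [this, Set.image_singleton]
      simp
    rw [h1, Ideal.span_singleton_one, Ideal.one_eq_top]
  | insert i s hi ih =>
    rw [Finset.prod_insert hi, Finset.sum_insert hi, ih, Ideal.span_mul_span',
      ← image_mon_add]

lemma mon_mem_span (q : Fin d →₀ ℕ) (T : Set (Fin d →₀ ℕ)) :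
    monomial q (1 : 𝕜) ∈ Ideal.span ((fun m => monomial m (1 : 𝕜)) '' T) ↔
      ∃ t ∈ T, t ≤ q := by
  rw [MvPolynomial.mem_ideal_span_monomial_image]
  simp [support_monomial]

end AuxSeven

/-- **Levelwise decomposition of `Γ_{n₀,𝐧}`.**
For every `n₀, 𝐧` and every level `m`, `π₁([Γ_{n₀,𝐧}]_m)` is the Minkowski sum of
`π₁([Γ_{n₀,𝟎}]_m)` and the sets `π₁([Γ_{0,n_i 𝐞_i}]_m)`, `1 ≤ i ≤ r`. -/
theorem statement7 {𝕜 : Type*} [Field 𝕜] (d r : ℕ) (hd : 0 < d)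
    (I : ℕ → Ideal (MvPolynomial (Fin d) 𝕜))
    (J : Fin r → ℕ → Ideal (MvPolynomial (Fin d) 𝕜)) (β c : ℕ)
    (hI : IsGradedFamily I)
    (hImon : ∀ n, IsMonomialIdeal (I n))
    (hIprim : ∀ n, 0 < n → IsMPrimary (I n))
    (hJ : ∀ i, IsGradedFamily (J i))
    (hJb : ∀ i n, IsMonomialBounded (J i n) (β * n))
    (hc : β < c)
    (hcap : ∀ (n0 : ℕ) (n : Fin r → ℕ),
      mId 𝕜 d ^ (c * (n0 + ∑ i, n i)) ⊓ (∏ i, J i (n i)) =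
        mId 𝕜 d ^ (c * (n0 + ∑ i, n i)) ⊓ (I n0 * ∏ i, J i (n i))) :
    ∀ (n0 : ℕ) (n : Fin r → ℕ) (m : ℕ),
      levelSet (GammaSet 𝕜 J c n0 n) m =
        levelSet (GammaSet 𝕜 J c n0 (fun _ => 0)) m +
          ∑ i : Fin r, levelSet (GammaSet 𝕜 J c 0 (Pi.single i (n i))) m := by
  intro n0 n m
  classical
  choose S hSdeg hSspan using fun i k => (hJb i k).2
  have hSne : ∀ i k, (S i k).Nonempty := by
    intro i k
    rcases Set.eq_empty_or_nonempty (S i k) with h | h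
    · exfalso
      apply (hJb i k).1
      rw [hSspan i k, h]
      simp
    · exact h
  have hS0 : ∀ j, S j 0 = (0 : Set (Fin d →₀ ℕ)) := by
    intro j
    ext x
    rw [Set.mem_zero]
    constructor
    · intro hx
      exact fdeg_le_zero (le_trans (hSdeg j 0 x hx) (by simp))
    · intro hx
      subst hx
      obtain ⟨y, hy⟩ := hSne j 0
      have hy0 : y = 0 := fdeg_le_zero (le_trans (hSdeg j 0 y hy) (by simp))
      exact hy0 ▸ hy
  have hlev : ∀ (a : ℕ) (b : Fin r → ℕ),
      levelSet (GammaSet 𝕜 J c a b) m =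
        DSet (∑ j, S j (m * b j)) (c * m * (a + ∑ j, b j)) := by
    intro a b
    have hprod : (∏ i, J i (m * b i)) =
        Ideal.span ((fun m' => monomial m' (1 : 𝕜)) '' (∑ j, S j (m * b j))) := by
      rw [← prod_span_mon]
      exact Finset.prod_congr rfl fun i _ => hSspan i (m * b i)
    ext q
    simp only [levelSet, GammaSet, Set.mem_setOf_eq, DSet, fdeg]
    rw [hprod, mon_mem_span]
  have hlev2 : ∀ i : Fin r, levelSet (GammaSet 𝕜 J c 0 (Pi.single i (n i))) m
      = DSet (S i (m * n i)) (c * m * (0 + n i)) := by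
    intro i
    rw [hlev 0 (Pi.single i (n i))]
    have h1 : (∑ j, S j (m * (Pi.single i (n i) : Fin r → ℕ) j)) = S i (m * n i) := by
      rw [Finset.sum_eq_single i]
      · rw [Pi.single_eq_same]
      · intro j _ hji
        rw [Pi.single_eq_of_ne hji, Nat.mul_zero, hS0 j]
      · intro h
        exact absurd (Finset.mem_univ i) h
    have h2 : (∑ j, (Pi.single i (n i) : Fin r → ℕ) j) = n i := by simp [Finset.sum_pi_single]
    rw [h1, h2]
  have hbound : ∀ i : Fin r, ∀ x ∈ S i (m * n i), fdeg x ≤ c * m * (0 + n i) := by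
    intro i x hx
    have h1 : fdeg x ≤ β * (m * n i) := hSdeg i (m * n i) x hx
    have h2 : β * (m * n i) ≤ c * (m * n i) := Nat.mul_le_mul_right _ hc.le
    have h3 : c * (m * n i) = c * m * (0 + n i) := by ring
    omega
  obtain ⟨hsum, hbddsum, hnesum⟩ := DSet_sum Finset.univ
    (fun i => S i (m * n i)) (fun i => c * m * (0 + n i))
    (fun i _ => ⟨hbound i, hSne i _⟩)
  rw [hlev n0 n, hlev n0 (fun _ => 0)]
  simp only [hlev2]
  rw [hsum]
  have hbase : (∑ j : Fin r, S j (m * 0)) = (0 : Set (Fin d →₀ ℕ)) := by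
    simp [hS0]
  rw [hbase]
  rw [DSet_add _ _ _ _
    (by rintro t ht; rw [Set.mem_zero] at ht; subst ht; simp [fdeg_zero])
    hbddsum]
  rw [zero_add]
  congr 1
  simp [mul_add, Finset.mul_sum]
end
end

section
/- In the 𝔪-primary case, for every 𝐧 = (n_1,…,n_r) ∈ ℕ^r and every m ∈ ℕ, π_1([Γ_𝐧]_m) = π_1([Γ_{n_1𝐞_1}]_m) + ⋯ + π_1([Γ_{n_r𝐞_r}]_m), a Minkowski sum of finite subsets of ℕ^d; that is, Γ_𝐧 is the levelwise sum Γ_{n_1𝐞_1} ⊕_t ⋯ ⊕_t Γ_{n_r𝐞_r}. -/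
open Filter MvPolynomial Pointwise MeasureTheory

noncomputable section

section AuxStatement8

open MvPolynomial Pointwise

variable {𝕜 : Type*} [Field 𝕜] {d : ℕ}



lemma monomial_mem_span_iff (S : Set (Fin d →₀ ℕ)) (q : Fin d →₀ ℕ) :
    monomial q (1:𝕜) ∈ Ideal.span ((fun m => monomial m (1:𝕜)) '' S) ↔ ∃ s ∈ S, s ≤ q := by
  rw [MvPolynomial.mem_ideal_span_monomial_image]
  simp [MvPolynomial.support_monomial]

lemma image_mul_image (A B : Set (Fin d →₀ ℕ)) :
    ((fun m => monomial m (1:𝕜)) '' A) * ((fun m => monomial m (1:𝕜)) '' B)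
      = (fun m => monomial m (1:𝕜)) '' (A + B) := by
  ext p
  simp only [Set.mem_mul, Set.mem_image, Set.mem_add]
  constructor
  · rintro ⟨_, ⟨a, ha, rfl⟩, _, ⟨b, hb, rfl⟩, rfl⟩
    exact ⟨a + b, ⟨a, ha, b, hb, rfl⟩, by rw [monomial_mul, one_mul]⟩
  · rintro ⟨_, ⟨a, ha, b, hb, rfl⟩, rfl⟩
    exact ⟨_, ⟨a, ha, rfl⟩, _, ⟨b, hb, rfl⟩, by rw [monomial_mul, one_mul]⟩

lemma prod_span_monomial {r : ℕ} (S : Fin r → Set (Fin d →₀ ℕ)) (t : Finset (Fin r)) :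
    ∏ i ∈ t, Ideal.span ((fun m => monomial m (1:𝕜)) '' S i)
      = Ideal.span ((fun m => monomial m (1:𝕜)) '' (∑ i ∈ t, S i)) := by
  classical
  induction t using Finset.induction with
  | empty =>
    simp only [Finset.prod_empty, Finset.sum_empty]
    have : ((fun m => monomial m (1:𝕜)) '' (0 : Set (Fin d →₀ ℕ))) = {1} := by
      ext p
      simp only [Set.mem_image, Set.mem_zero, Set.mem_singleton_iff]
      constructor
      · rintro ⟨a, rfl, rfl⟩; simp
      · rintro rfl; exact ⟨0, rfl, by simp⟩
    rw [this, Ideal.span_singleton_one, Ideal.one_eq_top]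
  | insert _ _ h ih =>
    rw [Finset.prod_insert h, Finset.sum_insert h, ih, Ideal.span_mul_span',
      image_mul_image]



lemma sum_single_one (j : Fin d) : ∑ j', (Finsupp.single j (1:ℕ)) j' = 1 := by
  simp [Finsupp.single_apply]

lemma exists_trunc (s : Fin d →₀ ℕ) (t : ℕ) (ht : t ≤ ∑ j, s j) :
    ∃ s' : Fin d →₀ ℕ, s' ≤ s ∧ ∑ j, s' j = t := by
  induction t with
  | zero => exact ⟨0, zero_le, by simp⟩
  | succ t ih =>
    obtain ⟨s', hle, hsum⟩ := ih (by omega)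
    obtain ⟨j, hj⟩ : ∃ j, s' j < s j := by
      by_contra h
      push_neg at h
      have := Finset.sum_le_sum (fun j _ => h j) (s := Finset.univ)
      omega
    refine ⟨s' + Finsupp.single j 1, ?_, ?_⟩
    · intro j'
      rw [Finsupp.add_apply, Finsupp.single_apply]
      rcases eq_or_ne j j' with rfl | hne
      · simpa using Nat.succ_le_of_lt hj
      · simpa [hne] using hle j'
    · simp only [Finsupp.add_apply, Finset.sum_add_distrib, hsum, sum_single_one]

lemma exists_split {r : ℕ} (t : Finset (Fin r)) : ∀ (s : Fin d →₀ ℕ) (cap : Fin r → ℕ),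
    (∑ j, s j) ≤ ∑ i ∈ t, cap i →
    ∃ f : Fin r → (Fin d →₀ ℕ), (∀ i ∈ t, ∑ j, f i j ≤ cap i) ∧ ∑ i ∈ t, f i = s := by
  classical
  induction t using Finset.induction with
  | empty =>
    intro s cap hs
    simp only [Finset.sum_empty, Nat.le_zero] at hs
    have : s = 0 := by
      ext j
      have := Finset.sum_eq_zero_iff.mp hs j (Finset.mem_univ j)
      simpa using this
    exact ⟨fun _ => 0, by simp, by simp [this]⟩
  | @insert a t ha ih =>
    intro s cap hs
    rw [Finset.sum_insert ha] at hs
    obtain ⟨sa, hsa_le, hsa_sum⟩ := exists_trunc s (min (cap a) (∑ j, s j)) (min_le_right _ _)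
    have hcancel : sa + (s - sa) = s := add_tsub_cancel_of_le hsa_le
    have hsub_sum : ∑ j, sa j + ∑ j, (s - sa) j = ∑ j, s j := by
      rw [← Finset.sum_add_distrib]
      exact Finset.sum_congr rfl fun j _ => by
        have := congrArg (fun f => f j) hcancel
        simpa using this
    obtain ⟨f, hf_cap, hf_sum⟩ := ih (s - sa) cap (by omega)
    have hupd : ∑ x ∈ t, Function.update f a sa x = ∑ x ∈ t, f x :=
      Finset.sum_congr rfl fun i hi => Function.update_of_ne (ne_of_mem_of_not_mem hi ha) _ _
    refine ⟨Function.update f a sa, ?_, ?_⟩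
    · intro i hi
      rcases Finset.mem_insert.mp hi with rfl | hi'
      · rw [Function.update_self]; omega
      · rw [Function.update_of_ne (ne_of_mem_of_not_mem hi' ha)]
        exact hf_cap i hi'
    · rw [Finset.sum_insert ha, Function.update_self, hupd, hf_sum, hcancel]

lemma monomial_mem_mId_pow (k : ℕ) : ∀ (e : Fin d →₀ ℕ), k ≤ ∑ j, e j →
    monomial e (1:𝕜) ∈ (Ideal.span (Set.range MvPolynomial.X) : Ideal (MvPolynomial (Fin d) 𝕜)) ^ k := by
  induction k with
  | zero => simp
  | succ k ih =>
    intro e he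
    obtain ⟨j, hj⟩ : ∃ j, 0 < e j := by
      by_contra h
      push_neg at h
      have : ∑ j, e j = 0 := Finset.sum_eq_zero fun j _ => Nat.le_zero.mp (h j)
      omega
    have hle : Finsupp.single j 1 ≤ e := Finsupp.single_le_iff.mpr hj
    set e' : Fin d →₀ ℕ := e - Finsupp.single j 1 with he'
    have hcancel : Finsupp.single j 1 + e' = e := add_tsub_cancel_of_le hle
    have hsum : ∑ j', e' j' + 1 = ∑ j', e j' := by
      have h1 := sum_single_one (d := d) j
      have h2 : ∑ j', (e' j' + (Finsupp.single j (1:ℕ)) j')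
          = ∑ j', e j' := Finset.sum_congr rfl fun j' _ => by
        have := congrArg (fun f => f j') hcancel
        simp only [Finsupp.add_apply] at this
        omega
      rw [Finset.sum_add_distrib, h1] at h2
      exact h2
    have hmem : monomial e' (1:𝕜) ∈
        (Ideal.span (Set.range MvPolynomial.X) : Ideal (MvPolynomial (Fin d) 𝕜)) ^ k :=
      ih _ (by omega)
    have hX : (X j : MvPolynomial (Fin d) 𝕜) ∈ Ideal.span (Set.range MvPolynomial.X) :=
      Ideal.subset_span (Set.mem_range_self j)
    have heq : monomial e (1:𝕜) = monomial e' (1:𝕜) * X j := by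
      rw [MvPolynomial.X, monomial_mul, one_mul, add_comm e' (Finsupp.single j 1), hcancel]
    rw [heq, pow_succ]
    exact Ideal.mul_mem_mul hmem hX



lemma prod_monomial' {r : ℕ} (t : Finset (Fin r)) (f : Fin r → (Fin d →₀ ℕ)) :
    ∏ i ∈ t, monomial (f i) (1:𝕜) = monomial (∑ i ∈ t, f i) 1 := by
  classical
  induction t using Finset.induction with
  | empty => simp
  | insert _ _ h ih => rw [Finset.prod_insert h, Finset.sum_insert h, ih, monomial_mul, one_mul]

end AuxStatement8

/-- **Levelwise decomposition in the `𝔪`-primary case:**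
`Γ_𝐧 = Γ_{n₁𝐞₁} ⊕_t ⋯ ⊕_t Γ_{n_r𝐞_r}`, i.e. for every level `m`,
`π₁([Γ_𝐧]_m) = π₁([Γ_{n₁𝐞₁}]_m) + ⋯ + π₁([Γ_{n_r𝐞_r}]_m)` (Minkowski sums).
Here `Γ_𝐧 = {(𝐦,m) : x^𝐦 ∈ 𝐉_{m𝐧}, |𝐦| ≤ c m |𝐧|}` is `GammaSet 𝕜 J c 0 𝐧`. -/
theorem statement8 {𝕜 : Type*} [Field 𝕜] (d r : ℕ) (hd : 0 < d)
    (J : Fin r → ℕ → Ideal (MvPolynomial (Fin d) 𝕜)) (c : ℕ)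
    (hJ : ∀ i, IsGradedFamily (J i))
    (hJmon : ∀ i n, IsMonomialIdeal (J i n))
    (hJprim : ∀ i n, 0 < n → IsMPrimary (J i n))
    (hc2 : 2 ≤ c)
    (hcont : ∀ i, mId 𝕜 d ^ (c - 1) ≤ J i 1) :
    ∀ (n : Fin r → ℕ) (m : ℕ),
      levelSet (GammaSet 𝕜 J c 0 n) m =
        ∑ i : Fin r, levelSet (GammaSet 𝕜 J c 0 (Pi.single i (n i))) m := by
  classical
  intro n m
  have hpow : ∀ (i : Fin r) (k : ℕ), (J i 1) ^ k ≤ J i k := by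
    intro i k
    induction k with
    | zero => rw [pow_zero, Ideal.one_eq_top, (hJ i).1]
    | succ k ih =>
      rw [pow_succ]
      exact le_trans (Ideal.mul_mono ih le_rfl) ((hJ i).2 k 1)
  have hmpow : ∀ (i : Fin r) (k : ℕ), mId 𝕜 d ^ ((c-1) * k) ≤ J i k := by
    intro i k
    rw [pow_mul]
    exact le_trans (Ideal.pow_right_mono (hcont i) k) (hpow i k)
  have hsingle : ∀ (i : Fin r) (q : Fin d →₀ ℕ),
      q ∈ levelSet (GammaSet 𝕜 J c 0 (Pi.single i (n i))) m ↔
        (monomial q (1:𝕜) ∈ J i (m * n i) ∧ ∑ j, q j ≤ c * m * n i) := by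
    intro i q
    have hprod : ∏ i', J i' (m * (Pi.single i (n i) : Fin r → ℕ) i') = J i (m * n i) := by
      rw [Finset.prod_eq_single i]
      · rw [Pi.single_eq_same]
      · intro b _ hb
        rw [Pi.single_eq_of_ne hb, mul_zero, (hJ b).1, Ideal.one_eq_top]
      · simp
    have hsum : ∑ i', (Pi.single i (n i) : Fin r → ℕ) i' = n i := by
      rw [Finset.sum_pi_single']
      simp
    simp only [levelSet, GammaSet, Set.mem_setOf_eq, hprod, hsum, zero_add]
  ext q
  rw [Set.mem_fintype_sum]
  simp only [levelSet, GammaSet, Set.mem_setOf_eq]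
  constructor
  · rintro ⟨hmem, hdeg⟩
    choose S hS using fun i => hJmon i (m * n i)
    simp only [hS] at hmem
    rw [prod_span_monomial, monomial_mem_span_iff] at hmem
    obtain ⟨u, hu_mem, hu_le⟩ := hmem
    rw [Set.mem_fintype_sum] at hu_mem
    obtain ⟨g, hg, hg_sum⟩ := hu_mem
    have hg_le : ∑ i, g i ≤ q := hg_sum ▸ hu_le
    have hg_mem : ∀ i, monomial (g i) (1:𝕜) ∈ J i (m * n i) := fun i => by
      rw [hS i]; exact Ideal.subset_span ⟨g i, hg i, rfl⟩
    have key : ∀ i, ∃ mi : Fin d →₀ ℕ, mi ≤ g i ∧ ∑ j, mi j ≤ (c-1) * (m * n i) ∧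
        monomial mi (1:𝕜) ∈ J i (m * n i) := by
      intro i
      by_cases h : ∑ j, g i j ≤ (c-1) * (m * n i)
      · exact ⟨g i, le_rfl, h, hg_mem i⟩
      · obtain ⟨mi, hle, hsum⟩ := exists_trunc (g i) ((c-1) * (m * n i))
          (le_of_lt (not_le.mp h))
        exact ⟨mi, hle, hsum.le,
          hmpow i (m * n i) (monomial_mem_mId_pow _ _ hsum.ge)⟩
    choose mi hmi_le hmi_deg hmi_mem using key
    have hmi_sum_le : ∑ i, mi i ≤ q :=
      le_trans (Finset.sum_le_sum fun i _ => hmi_le i) hg_le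
    set M : Fin d →₀ ℕ := ∑ i, mi i with hM
    have hMsum : ∑ j, M j = ∑ i, ∑ j, (mi i) j := by
      rw [hM]
      rw [Finset.sum_congr rfl fun j (_ : j ∈ Finset.univ) =>
        Finsupp.finset_sum_apply Finset.univ mi j]
      exact Finset.sum_comm
    set cap : Fin r → ℕ := fun i => c * (m * n i) - ∑ j, (mi i) j with hcap
    have hcap_ge : ∀ i, ∑ j, (mi i) j ≤ c * (m * n i) := fun i =>
      le_trans (hmi_deg i) (Nat.mul_le_mul_right _ (Nat.sub_le c 1))
    have hcap_sum : ∑ i, cap i + ∑ i, ∑ j, (mi i) j = ∑ i, c * (m * n i) := by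
      rw [← Finset.sum_add_distrib]
      exact Finset.sum_congr rfl fun i _ => Nat.sub_add_cancel (hcap_ge i)
    have hdeg' : ∑ j, q j ≤ ∑ i, c * (m * n i) := by
      rw [zero_add, Finset.mul_sum] at hdeg
      simpa only [mul_assoc] using hdeg
    set s : Fin d →₀ ℕ := q - M with hs
    have hs_cancel : M + s = q := add_tsub_cancel_of_le hmi_sum_le
    have hs_sum : ∑ j, M j + ∑ j, s j = ∑ j, q j := by
      rw [← Finset.sum_add_distrib]
      exact Finset.sum_congr rfl fun j _ => by
        have := congrArg (fun f => f j) hs_cancel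
        simpa using this
    obtain ⟨f, hf_cap, hf_sum⟩ := exists_split Finset.univ s cap (by omega)
    refine ⟨fun i => mi i + f i, fun i => (hsingle i _).mpr ⟨?_, ?_⟩, ?_⟩
    · have hmeq : monomial (mi i + f i) (1:𝕜) = monomial (mi i) 1 * monomial (f i) 1 := by
        rw [monomial_mul, one_mul]
      rw [hmeq]
      exact Ideal.mul_mem_right _ _ (hmi_mem i)
    · have h1 : ∑ j, (mi i + f i) j = ∑ j, (mi i) j + ∑ j, (f i) j := by
        rw [← Finset.sum_add_distrib]
        exact Finset.sum_congr rfl fun j _ => Finsupp.add_apply _ _ _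
      have h2 := hf_cap i (Finset.mem_univ i)
      have h3 := hcap_ge i
      have h4 : c * m * n i = c * (m * n i) := mul_assoc c m (n i)
      rw [h1, h4]
      simp only [hcap] at h2
      omega
    · rw [Finset.sum_add_distrib, hf_sum, hs_cancel]
  · rintro ⟨g, hg, rfl⟩
    have hg' := fun i => (hsingle i (g i)).mp (hg i)
    constructor
    · have hmeq : monomial (∑ i, g i) (1:𝕜) = ∏ i, monomial (g i) 1 :=
        (prod_monomial' Finset.univ g).symm
      rw [hmeq]
      exact Ideal.prod_mem_prod fun i _ => (hg' i).1
    · have h1 : ∑ j, (∑ i, g i) j = ∑ i, ∑ j, (g i) j := by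
        rw [Finset.sum_congr rfl fun j (_ : j ∈ Finset.univ) =>
          Finsupp.finset_sum_apply Finset.univ g j]
        exact Finset.sum_comm
      rw [h1, zero_add, Finset.mul_sum]
      exact Finset.sum_le_sum fun i _ => by
        have := (hg' i).2
        omega
end
end

section
/- For a > 0 let 𝕀_a = {I_{a,n}} be the Noetherian graded family generated by I_1,…,I_a (so I_{a,n} = I_n for n ≤ a and I_{a,n} = Σ_{i=1}^{n−1} I_{a,i}I_{a,n−i} for n > a), and define 𝕁(i)_a = {J(i)_{a,n}} likewise; set 𝐉_{a,𝐧} = J(1)_{a,n_1}⋯J(r)_{a,n_r}, Γ_{a,n_0,𝐧} = {(𝐦,m) ∈ ℕ^d×ℕ : x^𝐦 ∈ 𝐉_{a,m𝐧} and |𝐦| ≤ cm(n_0+|𝐧|)} and Γ̂_{a,n_0,𝐧} = {(𝐦,m) : x^𝐦 ∈ I_{a,m n_0}𝐉_{a,m𝐧} and |𝐦| ≤ cm(n_0+|𝐧|)}. Then for fixed n_0 ∈ ℕ, 𝐧 ∈ ℕ^r and ε > 0 there exists a_0 ∈ ℕ such that for all a ≥ a_0: Vol_d(Δ(Γ_{n_0,𝐧}))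 ≥ Vol_d(Δ(Γ_{a,n_0,𝐧})) ≥ Vol_d(Δ(Γ_{n_0,𝐧})) − ε, and Vol_d(Δ(Γ̂_{n_0,𝐧})) ≥ Vol_d(Δ(Γ̂_{a,n_0,𝐧})) ≥ Vol_d(Δ(Γ̂_{n_0,𝐧})) − ε. -/
open Filter MvPolynomial Pointwise MeasureTheory

noncomputable section

namespace S13aux

lemma sum_ideal_le {R ι : Type*} [CommSemiring R] {s : Finset ι} {f : ι → Ideal R} {N : Ideal R}
    (h : ∀ i ∈ s, f i ≤ N) : (∑ i ∈ s, f i) ≤ N :=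
  Finset.sum_induction f (· ≤ N)
    (fun a b ha hb => by rw [Submodule.add_eq_sup]; exact sup_le ha hb)
    (by simp) h

lemma prod_ideal_mono {R ι : Type*} [CommSemiring R] {s : Finset ι} {f g : ι → Ideal R}
    (h : ∀ i ∈ s, f i ≤ g i) : (∏ i ∈ s, f i) ≤ ∏ i ∈ s, g i := by
  classical
  induction s using Finset.induction_on with
  | empty => simp
  | @insert _ _ hns ih =>
    rw [Finset.prod_insert hns, Finset.prod_insert hns]
    exact Ideal.mul_mono (h _ (Finset.mem_insert_self _ _))
      (ih fun i hi => h i (Finset.mem_insert_of_mem hi))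

section trunc
variable {R : Type*} [CommSemiring R] {J : ℕ → Ideal R} {Jt : ℕ → ℕ → Ideal R}

lemma trunc_le (hgr : ∀ i j, J i * J j ≤ J (i + j))
    (h1 : ∀ a n, n ≤ a → Jt a n = J n)
    (h2 : ∀ a n, a < n → Jt a n = ∑ i ∈ Finset.Ioo 0 n, Jt a i * Jt a (n - i))
    (a n : ℕ) : Jt a n ≤ J n := by
  induction n using Nat.strong_induction_on with
  | _ n ih =>
    by_cases hna : n ≤ a
    · rw [h1 a n hna]
    · push_neg at hna
      rw [h2 a n hna]
      refine sum_ideal_le fun i hi => ?_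
      obtain ⟨hi0, hin⟩ := Finset.mem_Ioo.1 hi
      have e : i + (n - i) = n := by omega
      calc Jt a i * Jt a (n - i) ≤ J i * J (n - i) :=
            Ideal.mul_mono (ih i hin) (ih (n - i) (by omega))
        _ ≤ J n := by have := hgr i (n - i); rwa [e] at this

lemma trunc_mono (hgr : ∀ i j, J i * J j ≤ J (i + j))
    (h1 : ∀ a n, n ≤ a → Jt a n = J n)
    (h2 : ∀ a n, a < n → Jt a n = ∑ i ∈ Finset.Ioo 0 n, Jt a i * Jt a (n - i))
    {a a' : ℕ} (haa : a ≤ a') (n : ℕ) : Jt a n ≤ Jt a' n := by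
  induction n using Nat.strong_induction_on with
  | _ n ih =>
    by_cases hna' : n ≤ a'
    · rw [h1 a' n hna']
      exact trunc_le hgr h1 h2 a n
    · push_neg at hna'
      have hna : a < n := lt_of_le_of_lt haa hna'
      rw [h2 a n hna, h2 a' n hna']
      refine Finset.sum_le_sum fun i hi => ?_
      obtain ⟨hi0, hin⟩ := Finset.mem_Ioo.1 hi
      exact Ideal.mul_mono (ih i hin) (ih (n - i) (by omega))

end trunc

def preCone {d : ℕ} (S : Set ((Fin d → ℝ) × ℝ)) : Set ((Fin d → ℝ) × ℝ) :=
  {x | ∃ (k : ℕ) (a : Fin k → ℝ) (v : Fin k → (Fin d → ℝ) × ℝ),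
    (∀ j, 0 ≤ a j) ∧ (∀ j, v j ∈ S) ∧ x = ∑ j, a j • v j}

variable {d : ℕ}

lemma coneOf_eq (S : Set ((Fin d → ℝ) × ℝ)) : coneOf S = closure (preCone S) := rfl

lemma preCone_mono {S T : Set ((Fin d → ℝ) × ℝ)} (h : S ⊆ T) : preCone S ⊆ preCone T := by
  rintro x ⟨k, a, v, ha, hv, rfl⟩
  exact ⟨k, a, v, ha, fun j => h (hv j), rfl⟩

lemma smul_mem_preCone {S : Set ((Fin d → ℝ) × ℝ)} {x : (Fin d → ℝ) × ℝ} {t : ℝ} (ht : 0 ≤ t)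
    (hx : x ∈ preCone S) : t • x ∈ preCone S := by
  obtain ⟨k, a, v, ha, hv, rfl⟩ := hx
  exact ⟨k, fun j => t * a j, v, fun j => mul_nonneg ht (ha j), hv, by
    rw [Finset.smul_sum]; simp [smul_smul]⟩

lemma add_mem_preCone {S : Set ((Fin d → ℝ) × ℝ)} {x y : (Fin d → ℝ) × ℝ}
    (hx : x ∈ preCone S) (hy : y ∈ preCone S) : x + y ∈ preCone S := by
  obtain ⟨k, a, v, ha, hv, rfl⟩ := hx
  obtain ⟨k', a', v', ha', hv', rfl⟩ := hy
  refine ⟨k + k', Fin.append a a', Fin.append v v', ?_, ?_, ?_⟩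
  · intro j
    refine Fin.addCases (fun i => ?_) (fun i => ?_) j <;> simp [ha _, ha' _]
  · intro j
    refine Fin.addCases (fun i => ?_) (fun i => ?_) j <;> simp [hv _, hv' _]
  · rw [Fin.sum_univ_add]; simp

lemma convex_preCone (S : Set ((Fin d → ℝ) × ℝ)) : Convex ℝ (preCone S) := by
  intro x hx y hy a b ha hb _
  exact add_mem_preCone (smul_mem_preCone ha hx) (smul_mem_preCone hb hy)

lemma preCone_iUnion {S : ℕ → Set ((Fin d → ℝ) × ℝ)} (hmono : Monotone S) :
    preCone (⋃ a, S a) = ⋃ a, preCone (S a) := by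
  apply Set.Subset.antisymm
  · rintro x ⟨k, a, v, ha, hv, rfl⟩
    have hvv : ∀ j, ∃ N, v j ∈ S N := fun j => Set.mem_iUnion.1 (hv j)
    choose f hf using hvv
    rcases isEmpty_or_nonempty (Fin k) with h | h
    · exact Set.mem_iUnion.2 ⟨0, k, a, v, ha, fun j => (h.false j).elim, rfl⟩
    · obtain ⟨N, hN⟩ := Finite.exists_max f
      exact Set.mem_iUnion.2 ⟨f N, k, a, v, ha, fun j => hmono (hN j) (hf j), rfl⟩
  · exact Set.iUnion_subset fun a => preCone_mono (Set.subset_iUnion _ a)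

open Filter Topology in
lemma slice_closure {P : Set ((Fin d → ℝ) × ℝ)}
    (hsm : ∀ t : ℝ, 0 ≤ t → ∀ x ∈ P, t • x ∈ P)
    {x : (Fin d → ℝ) × ℝ} (hx : x ∈ closure P) (hx2 : x.2 = 1) :
    x ∈ closure (P ∩ {y | y.2 = 1}) := by
  obtain ⟨u, hu, hulim⟩ := mem_closure_iff_seq_limit.1 hx
  have h2 : Tendsto (fun n => (u n).2) atTop (𝓝 1) := by
    have := (continuous_snd.tendsto x).comp hulim
    rwa [hx2] at this
  have hev : ∀ᶠ n in atTop, 0 < (u n).2 := h2.eventually (lt_mem_nhds one_pos)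
  have hlim : Tendsto (fun n : ℕ => ((u n).2)⁻¹ • u n) atTop (𝓝 x) := by
    have h3 : Tendsto (fun n => ((u n).2)⁻¹) atTop (𝓝 1⁻¹) := h2.inv₀ one_ne_zero
    have := h3.smul hulim
    rwa [inv_one, one_smul] at this
  refine mem_closure_of_tendsto hlim ?_
  filter_upwards [hev] with n hn
  refine ⟨hsm _ (inv_nonneg.2 hn.le) _ (hu n), ?_⟩
  show (((u n).2)⁻¹ • u n).2 = 1
  simp [inv_mul_cancel₀ hn.ne']

/-- The key abstract approximation lemma. -/
lemma key {M : ℕ} {S : ℕ → Set ((Fin d →₀ ℕ) × ℕ)} {Sf : Set ((Fin d →₀ ℕ) × ℕ)}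
    (hmono : Monotone S) (hsub : ∀ a, S a ⊆ Sf) (hcover : Sf ⊆ ⋃ a, S a)
    (hbound : ∀ q ∈ Sf, (∑ j, q.1 j) ≤ M * q.2) {ε : ℝ} (hε : 0 < ε) :
    ∃ a0 : ℕ, ∀ a, a0 ≤ a →
      volDelta Sf ≥ volDelta (S a) ∧ volDelta (S a) ≥ volDelta Sf - ε := by
  classical
  set H : Set ((Fin d → ℝ) × ℝ) := {y | y.2 = 1} with hH
  set P : ℕ → Set ((Fin d → ℝ) × ℝ) := fun a => preCone (embedReal '' S a) with hP
  set Pf : Set ((Fin d → ℝ) × ℝ) := preCone (embedReal '' Sf) with hPf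
  set D : ℕ → Set (Fin d → ℝ) := fun a => Prod.fst '' newtonBody (S a) with hD
  set Df : Set (Fin d → ℝ) := Prod.fst '' newtonBody Sf with hDf
  have hNB : ∀ T : Set ((Fin d →₀ ℕ) × ℕ),
      newtonBody T = closure (preCone (embedReal '' T)) ∩ {y | y.2 = 1} := fun T => rfl
  have hPmono : Monotone P := fun a b hab =>
    preCone_mono (Set.image_mono (hmono hab))
  have hPsub : ∀ a, P a ⊆ Pf := fun a => preCone_mono (Set.image_mono (hsub a))
  have hDmono : Monotone D := by
    intro a b hab
    refine Set.image_mono ?_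
    rw [hNB, hNB]
    exact Set.inter_subset_inter_left _ (closure_mono (hPmono hab))
  have hDsub : ∀ a, D a ⊆ Df := by
    intro a
    refine Set.image_mono ?_
    rw [hNB, hNB]
    exact Set.inter_subset_inter_left _ (closure_mono (hPsub a))
  -- boundedness
  set T : Set ((Fin d → ℝ) × ℝ) :=
    {x | (∀ j, 0 ≤ x.1 j) ∧ (∑ j, x.1 j) ≤ (M : ℝ) * x.2} with hT
  have hTclosed : IsClosed T := by
    have h1 : IsClosed {x : (Fin d → ℝ) × ℝ | ∀ j, 0 ≤ x.1 j} := by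
      have : {x : (Fin d → ℝ) × ℝ | ∀ j, 0 ≤ x.1 j} = ⋂ j, {x | 0 ≤ x.1 j} := by
        ext x; simp
      rw [this]
      exact isClosed_iInter fun j =>
        isClosed_le continuous_const ((continuous_apply j).comp continuous_fst)
    have h2 : IsClosed {x : (Fin d → ℝ) × ℝ | (∑ j, x.1 j) ≤ (M : ℝ) * x.2} :=
      isClosed_le (continuous_finset_sum _ fun j _ => (continuous_apply j).comp continuous_fst)
        (continuous_const.mul continuous_snd)
    exact h1.inter h2
  have hPfT : Pf ⊆ T := by
    rintro x ⟨k, a, v, ha, hv, rfl⟩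
    have hvT : ∀ j, v j ∈ T := by
      intro j
      obtain ⟨q, hq, hqe⟩ := hv j
      rw [← hqe]
      constructor
      · intro jj; exact Nat.cast_nonneg _
      · show (∑ jj, ((q.1 jj : ℝ))) ≤ (M : ℝ) * (q.2 : ℝ)
        exact_mod_cast hbound q hq
    constructor
    · intro jj
      rw [Prod.fst_sum, Finset.sum_apply]
      exact Finset.sum_nonneg fun j _ => by
        simpa [smul_eq_mul] using mul_nonneg (ha j) ((hvT j).1 jj)
    · rw [Prod.fst_sum, Prod.snd_sum]
      have : ∀ jj : Fin d, (∑ j, (a j • v j).1) jj = ∑ j, a j * (v j).1 jj := by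
        intro jj; rw [Finset.sum_apply]; simp
      calc (∑ jj, (∑ j, (a j • v j).1) jj) = ∑ jj, ∑ j, a j * (v j).1 jj := by
            exact Finset.sum_congr rfl fun jj _ => this jj
        _ = ∑ j, a j * ∑ jj, (v j).1 jj := by
            rw [Finset.sum_comm]; simp [Finset.mul_sum]
        _ ≤ ∑ j, a j * ((M : ℝ) * (v j).2) := by
            refine Finset.sum_le_sum fun j _ => mul_le_mul_of_nonneg_left (hvT j).2 (ha j)
        _ = (M : ℝ) * ∑ j, (a j • v j).2 := by
            simp [Finset.mul_sum, smul_eq_mul]; ring_nf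
            exact Finset.sum_congr rfl fun j _ => by ring
  have hDfBox : Df ⊆ Set.pi Set.univ (fun _ : Fin d => Set.Icc (0 : ℝ) M) := by
    rintro y ⟨x, hx, rfl⟩
    obtain ⟨hx1, hx2⟩ := hx
    rw [coneOf_eq] at hx1
    have hxT : x ∈ T := closure_minimal hPfT hTclosed hx1
    intro j _
    refine ⟨hxT.1 j, ?_⟩
    calc x.1 j ≤ ∑ jj, x.1 jj :=
          Finset.single_le_sum (fun i _ => hxT.1 i) (Finset.mem_univ j)
      _ ≤ (M : ℝ) * x.2 := hxT.2
      _ = (M : ℝ) := by rw [hx2, mul_one]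
  have hfin : volume Df ≠ ⊤ := by
    refine ne_top_of_le_ne_top ?_ (measure_mono hDfBox)
    exact ((isCompact_univ_pi fun _ => isCompact_Icc).measure_lt_top).ne
  have hDafin : ∀ a, volume (D a) ≠ ⊤ := fun a =>
    ne_top_of_le_ne_top hfin (measure_mono (hDsub a))
  -- the approximating convex sets
  set Q : ℕ → Set (Fin d → ℝ) := fun a => Prod.fst '' (P a ∩ H) with hQ
  have hQconv : ∀ a, Convex ℝ (Q a) := by
    intro a
    have hHconv : Convex ℝ H := by
      intro x hx y hy s t hs ht hst
      show (s • x + t • y).2 = 1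
      have hx' : x.2 = 1 := hx
      have hy' : y.2 = 1 := hy
      simp [Prod.snd_add, hx', hy', hst]
    exact ((convex_preCone _).inter hHconv).is_linear_image
      ((LinearMap.fst ℝ (Fin d → ℝ) ℝ).isLinear)
  have hQmono : Monotone Q := fun a b hab =>
    Set.image_mono (Set.inter_subset_inter_left _ (hPmono hab))
  have hQD : ∀ a, Q a ⊆ D a := by
    intro a
    refine Set.image_mono ?_
    rw [hNB]
    exact Set.inter_subset_inter_left _ subset_closure
  set U : Set (Fin d → ℝ) := ⋃ a, Q a with hU
  have hQdir : Directed (· ⊆ ·) Q := fun a b =>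
    ⟨max a b, hQmono (le_max_left a b), hQmono (le_max_right a b)⟩
  have hUconv : Convex ℝ U := hQdir.convex_iUnion hQconv
  -- density
  have hdensity : Df ⊆ closure U := by
    rintro y ⟨x, hx, rfl⟩
    obtain ⟨hx1, hx2⟩ := hx
    rw [coneOf_eq] at hx1
    have hxcl : x ∈ closure (Pf ∩ H) :=
      slice_closure (fun t ht z hz => smul_mem_preCone ht hz) hx1 hx2
    have hSfU : Sf = ⋃ a, S a := Set.Subset.antisymm hcover (Set.iUnion_subset hsub)
    have hPfU : Pf ∩ H = ⋃ a, (P a ∩ H) := by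
      rw [hPf, hSfU, Set.image_iUnion,
        preCone_iUnion (fun a b hab => Set.image_mono (hmono hab)), Set.iUnion_inter]
    rw [hPfU] at hxcl
    have h1 : x.1 ∈ Prod.fst '' closure (⋃ a, (P a ∩ H)) := ⟨x, hxcl, rfl⟩
    have h2 := image_closure_subset_closure_image (f := Prod.fst) continuous_fst h1
    rwa [Set.image_iUnion] at h2
  -- measure chain
  have hchain : volume Df ≤ ⨆ a, volume (D a) := by
    calc volume Df ≤ volume (closure U) := measure_mono hdensity
      _ ≤ volume U + volume (frontier U) := by
          rw [closure_eq_self_union_frontier]; exact measure_union_le _ _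
      _ = volume U := by rw [hUconv.addHaar_frontier volume, add_zero]
      _ = ⨆ a, volume (Q a) := hQdir.measure_iUnion
      _ ≤ ⨆ a, volume (D a) := iSup_mono fun a => measure_mono (hQD a)
  have hsup : (⨆ a, volume (D a)) = volume Df :=
    le_antisymm (iSup_le fun a => measure_mono (hDsub a)) hchain
  have hvol : ∀ a, volDelta (S a) = (volume (D a)).toReal := fun a => rfl
  have hvolf : volDelta Sf = (volume Df).toReal := rfl
  by_cases hle : (volume Df).toReal - ε ≤ 0
  · refine ⟨0, fun a _ => ⟨?_, ?_⟩⟩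
    · exact ENNReal.toReal_mono hfin (measure_mono (hDsub a))
    · rw [hvol, hvolf]
      have : (0 : ℝ) ≤ (volume (D a)).toReal := ENNReal.toReal_nonneg
      linarith
  · push_neg at hle
    have htpos : 0 < (volume Df).toReal - ε := hle
    have h1 : ENNReal.ofReal ((volume Df).toReal - ε) < volume Df :=
      (ENNReal.ofReal_lt_iff_lt_toReal htpos.le hfin).2 (by linarith)
    obtain ⟨a0, ha0⟩ := lt_iSup_iff.1 (lt_of_lt_of_le h1 hsup.ge)
    refine ⟨a0, fun a haa => ⟨ENNReal.toReal_mono hfin (measure_mono (hDsub a)), ?_⟩⟩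
    have h2 : ENNReal.ofReal ((volume Df).toReal - ε) < volume (D a) :=
      lt_of_lt_of_le ha0 (measure_mono (hDmono haa))
    have h3 : (volume Df).toReal - ε < (volume (D a)).toReal :=
      (ENNReal.ofReal_lt_iff_lt_toReal htpos.le (hDafin a)).1 h2
    rw [hvol, hvolf]
    linarith

end S13aux

/-- **Approximation by truncated families.**
Let `It a` (resp. `Jt i a`) be the Noetherian graded family generated by `I_1, …, I_a`
(resp. `J(i)_1, …, J(i)_a`): `It a n = I n` for `n ≤ a` and
`It a n = Σ_{0<i<n} It a i · It a (n−i)` for `n > a`.  Then for fixed `n₀, 𝐧, ε > 0` there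
exists `a₀` such that for all `a ≥ a₀`,
`Vol_d(Δ(Γ_{n₀,𝐧})) ≥ Vol_d(Δ(Γ_{a,n₀,𝐧})) ≥ Vol_d(Δ(Γ_{n₀,𝐧})) − ε` and
`Vol_d(Δ(Γ̂_{n₀,𝐧})) ≥ Vol_d(Δ(Γ̂_{a,n₀,𝐧})) ≥ Vol_d(Δ(Γ̂_{n₀,𝐧})) − ε`. -/
theorem statement13 {𝕜 : Type*} [Field 𝕜] (d r : ℕ) (hd : 0 < d)
    (I : ℕ → Ideal (MvPolynomial (Fin d) 𝕜))
    (J : Fin r → ℕ → Ideal (MvPolynomial (Fin d) 𝕜)) (β c : ℕ)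
    (hI : IsGradedFamily I)
    (hImon : ∀ n, IsMonomialIdeal (I n))
    (hIprim : ∀ n, 0 < n → IsMPrimary (I n))
    (hJ : ∀ i, IsGradedFamily (J i))
    (hJb : ∀ i n, IsMonomialBounded (J i n) (β * n))
    (hc : β < c)
    (hcap : ∀ (n0 : ℕ) (n : Fin r → ℕ),
      mId 𝕜 d ^ (c * (n0 + ∑ i, n i)) ⊓ (∏ i, J i (n i)) =
        mId 𝕜 d ^ (c * (n0 + ∑ i, n i)) ⊓ (I n0 * ∏ i, J i (n i)))
    (It : ℕ → ℕ → Ideal (MvPolynomial (Fin d) 𝕜))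
    (Jt : Fin r → ℕ → ℕ → Ideal (MvPolynomial (Fin d) 𝕜))
    (hIt1 : ∀ a n, n ≤ a → It a n = I n)
    (hIt2 : ∀ a n, a < n → It a n = ∑ i ∈ Finset.Ioo 0 n, It a i * It a (n - i))
    (hJt1 : ∀ i a n, n ≤ a → Jt i a n = J i n)
    (hJt2 : ∀ i a n, a < n → Jt i a n = ∑ k ∈ Finset.Ioo 0 n, Jt i a k * Jt i a (n - k))
    (n0 : ℕ) (n : Fin r → ℕ) (ε : ℝ) (hε : 0 < ε) :
    ∃ a0 : ℕ, ∀ a : ℕ, a0 ≤ a →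
      (volDelta (GammaSet 𝕜 J c n0 n) ≥ volDelta (GammaSet 𝕜 (fun i => Jt i a) c n0 n) ∧
        volDelta (GammaSet 𝕜 (fun i => Jt i a) c n0 n) ≥ volDelta (GammaSet 𝕜 J c n0 n) - ε) ∧
      (volDelta (GammaHatSet 𝕜 I J c n0 n) ≥
          volDelta (GammaHatSet 𝕜 (It a) (fun i => Jt i a) c n0 n) ∧
        volDelta (GammaHatSet 𝕜 (It a) (fun i => Jt i a) c n0 n) ≥
          volDelta (GammaHatSet 𝕜 I J c n0 n) - ε) := by
  classical
  -- ideal monotonicity facts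
  have hJle : ∀ i a m, Jt i a m ≤ J i m := fun i a m =>
    S13aux.trunc_le (hJ i).2 (hJt1 i) (hJt2 i) a m
  have hJmono : ∀ i (a a' : ℕ), a ≤ a' → ∀ m, Jt i a m ≤ Jt i a' m := fun i a a' h m =>
    S13aux.trunc_mono (hJ i).2 (hJt1 i) (hJt2 i) h m
  have hIle : ∀ a m, It a m ≤ I m := fun a m =>
    S13aux.trunc_le hI.2 hIt1 hIt2 a m
  have hImono : ∀ (a a' : ℕ), a ≤ a' → ∀ m, It a m ≤ It a' m := fun a a' h m =>
    S13aux.trunc_mono hI.2 hIt1 hIt2 h m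
  have hni : ∀ (q2 : ℕ) i, q2 * n i ≤ q2 * (n0 + ∑ i, n i) := by
    intro q2 i
    refine Nat.mul_le_mul_left _ ?_
    have : n i ≤ ∑ i, n i := Finset.single_le_sum (fun i _ => Nat.zero_le _) (Finset.mem_univ i)
    omega
  -- the Gamma family
  obtain ⟨a1, ha1⟩ := S13aux.key (M := c * (n0 + ∑ i, n i))
    (S := fun a => GammaSet 𝕜 (fun i => Jt i a) c n0 n) (Sf := GammaSet 𝕜 J c n0 n)
    (by
      intro a b hab q hq
      obtain ⟨hm, hdeg⟩ := hq
      exact ⟨S13aux.prod_ideal_mono (fun i _ => hJmono i a b hab _) hm, hdeg⟩)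
    (by
      intro a q hq
      obtain ⟨hm, hdeg⟩ := hq
      exact ⟨S13aux.prod_ideal_mono (fun i _ => hJle i a _) hm, hdeg⟩)
    (by
      intro q hq
      obtain ⟨hm, hdeg⟩ := hq
      refine Set.mem_iUnion.2 ⟨q.2 * (n0 + ∑ i, n i), ?_, hdeg⟩
      have : (∏ i, Jt i (q.2 * (n0 + ∑ i, n i)) (q.2 * n i)) = ∏ i, J i (q.2 * n i) :=
        Finset.prod_congr rfl fun i _ => hJt1 i _ _ (hni q.2 i)
      rw [this]
      exact hm)
    (by
      intro q hq
      calc (∑ j, q.1 j) ≤ c * q.2 * (n0 + ∑ i, n i) := hq.2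
        _ = c * (n0 + ∑ i, n i) * q.2 := by ring)
    hε
  -- the GammaHat family
  obtain ⟨a2, ha2⟩ := S13aux.key (M := c * (n0 + ∑ i, n i))
    (S := fun a => GammaHatSet 𝕜 (It a) (fun i => Jt i a) c n0 n)
    (Sf := GammaHatSet 𝕜 I J c n0 n)
    (by
      intro a b hab q hq
      obtain ⟨hm, hdeg⟩ := hq
      exact ⟨Ideal.mul_mono (hImono a b hab _)
        (S13aux.prod_ideal_mono (fun i _ => hJmono i a b hab _)) hm, hdeg⟩)
    (by
      intro a q hq
      obtain ⟨hm, hdeg⟩ := hq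
      exact ⟨Ideal.mul_mono (hIle a _)
        (S13aux.prod_ideal_mono (fun i _ => hJle i a _)) hm, hdeg⟩)
    (by
      intro q hq
      obtain ⟨hm, hdeg⟩ := hq
      refine Set.mem_iUnion.2 ⟨q.2 * (n0 + ∑ i, n i), ?_, hdeg⟩
      have h1 : It (q.2 * (n0 + ∑ i, n i)) (q.2 * n0) = I (q.2 * n0) :=
        hIt1 _ _ (Nat.mul_le_mul_left _ (by omega))
      have h2 : (∏ i, Jt i (q.2 * (n0 + ∑ i, n i)) (q.2 * n i)) = ∏ i, J i (q.2 * n i) :=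
        Finset.prod_congr rfl fun i _ => hJt1 i _ _ (hni q.2 i)
      rw [h1, h2]
      exact hm)
    (by
      intro q hq
      calc (∑ j, q.1 j) ≤ c * q.2 * (n0 + ∑ i, n i) := hq.2
        _ = c * (n0 + ∑ i, n i) * q.2 := by ring)
    hε
  refine ⟨max a1 a2, fun a ha => ?_⟩
  exact ⟨ha1 a (le_trans (le_max_left _ _) ha), ha2 a (le_trans (le_max_right _ _) ha)⟩
end
end

section
/- Suppose the graded families 𝕁(1),…,𝕁(r) are in addition graded families of 𝔪-primary monomial ideals. Let G(n_0,𝐧) be the homogeneous degree-d polynomial with G(n_0,𝐧) = lim_{m→∞} dim_𝕜( 𝐉_{m𝐧} / I_{m n_0}𝐉_{m𝐧} ) / m^d, let G'(n_0,𝐧) be the homogeneous degree-d polynomial with G'(n_0,𝐧) = lim_{m→∞} dim_𝕜( R / I_{m n_0}𝐉_{m𝐧} ) / m^d (which exists by the theorem in the 𝔪-primary case applied to the r+1 families 𝕀,𝕁(1),…,𝕁(r)), and let H(𝐧) be the homogeneous degree-d polynomial with H(𝐧) = lim_{m→∞} dim_𝕜( R / 𝐉_{m𝐧} ) / m^d.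 Then G'(n_0,𝐧) = G(n_0,𝐧) + H(𝐧) for all (n_0,𝐧) ∈ ℕ^{r+1}. Consequently, for each (d_0,𝐝) ∈ ℕ^{r+1} with d_0+|𝐝| = d: (i) if d_0 = 0 then e_{(d_0,𝐝)}(𝕀,𝕁(1),…,𝕁(r)) = e_𝐝(𝕁(1),…,𝕁(r)); (ii) if d_0 > 0 then e_{(d_0,𝐝)}(𝕀,𝕁(1),…,𝕁(r)) = e_{(d_0−1,𝐝)}(𝕀 | 𝕁(1),…,𝕁(r)). -/
open Filter MvPolynomial Pointwise MeasureTheory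

noncomputable section

/-! ### Auxiliary lemmas -/

lemma aux_vanish : ∀ {k : ℕ} (P : MvPolynomial (Fin k) ℝ),
    (∀ n : Fin k → ℕ, eval (fun i => (n i : ℝ)) P = 0) → P = 0 := by
  intro k
  induction k with
  | zero =>
    intro P h
    obtain ⟨a, rfl⟩ := MvPolynomial.C_surjective (Fin 0) P
    have := h 0
    simpa using this
  | succ k ih =>
    intro P h
    have hQ : ∀ j : ℕ, (finSuccEquiv ℝ k P).coeff j = 0 := by
      intro j
      apply ih
      intro n
      have hpoly : Polynomial.map (eval fun i => (n i : ℝ)) (finSuccEquiv ℝ k P) = 0 := by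
        apply Polynomial.eq_zero_of_infinite_isRoot
        apply Set.Infinite.mono (s := Set.range (Nat.cast : ℕ → ℝ))
        · rintro _ ⟨m, rfl⟩
          have := h (Fin.cons m n)
          rw [show (fun i => ((Fin.cons m n : Fin (k+1) → ℕ) i : ℝ))
              = Fin.cons (m:ℝ) (fun i => (n i : ℝ)) from ?_] at this
          · rw [eval_eq_eval_mv_eval'] at this
            simpa [Polynomial.IsRoot] using this
          · ext i
            refine Fin.cases ?_ ?_ i <;> simp
        · exact Set.infinite_range_of_injective Nat.cast_injective
      have := congrArg (fun q => Polynomial.coeff q j) hpoly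
      simpa using this
    have hz : finSuccEquiv ℝ k P = 0 := Polynomial.ext fun j => by simp [hQ j]
    have h2 : finSuccEquiv ℝ k P = finSuccEquiv ℝ k 0 := by simp [hz]
    exact (finSuccEquiv ℝ k).injective h2

lemma monomial_mem_mId_pow_s19 {𝕜 : Type*} [Field 𝕜] {d : ℕ} (N : ℕ) (m : Fin d →₀ ℕ) (c : 𝕜)
    (hm : N ≤ ∑ j, m j) : monomial m c ∈ mId 𝕜 d ^ N := by
  induction N generalizing m with
  | zero => simp
  | succ N ih =>
    have hpos : 0 < ∑ j, m j := lt_of_lt_of_le (Nat.succ_pos N) hm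
    obtain ⟨i, hi⟩ : ∃ i, 0 < m i := by
      by_contra hc
      push_neg at hc
      simp only [Nat.le_zero] at hc
      simp [Finset.sum_congr rfl fun j _ => hc j] at hpos
    have hms : Finsupp.single i 1 + (m - Finsupp.single i 1) = m := by
      ext j
      rw [Finsupp.add_apply, Finsupp.tsub_apply, Finsupp.single_apply]
      split
      · rename_i hij; subst hij; omega
      · omega
    have hsum : ∑ j, ((m - Finsupp.single i 1 : Fin d →₀ ℕ)) j = (∑ j, m j) - 1 := by
      have h1 : ∑ j, m j = ∑ j, (Finsupp.single i 1 j + (m - Finsupp.single i 1 : Fin d →₀ ℕ) j) := by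
        congr 1; ext j; rw [← Finsupp.add_apply, hms]
      rw [Finset.sum_add_distrib] at h1
      have h2 : ∑ j, Finsupp.single i 1 j = 1 := by
        simp [Finsupp.single_apply]
      omega
    have hdec : monomial m c = X i * monomial (m - Finsupp.single i 1) c := by
      rw [X, monomial_mul, one_mul, hms]
    rw [hdec, pow_succ']
    exact Ideal.mul_mem_mul (Ideal.subset_span ⟨i, rfl⟩) (ih _ (by omega))

lemma fd_of_pow_le {𝕜 : Type*} [Field 𝕜] {d : ℕ} (C : Ideal (MvPolynomial (Fin d) 𝕜)) (N : ℕ)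
    (hN : mId 𝕜 d ^ N ≤ C) :
    FiniteDimensional 𝕜 (MvPolynomial (Fin d) 𝕜 ⧸ C) := by
  classical
  set R := MvPolynomial (Fin d) 𝕜
  set T : Finset (Fin d →₀ ℕ) := Finset.Iic (Finsupp.equivFunOnFinite.symm fun _ => N) with hT
  set V : Submodule 𝕜 R := Submodule.span 𝕜
    ((fun m => (monomial m (1:𝕜) : R)) '' (T : Set (Fin d →₀ ℕ))) with hV
  have hVfin : FiniteDimensional 𝕜 V := by
    apply FiniteDimensional.span_of_finite
    exact Set.Finite.image _ T.finite_toSet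
  have hsup : ∀ p : R, ∃ v ∈ V, ∃ c ∈ C, p = v + c := by
    intro p
    have hp : p ∈ V ⊔ Submodule.restrictScalars 𝕜 C := by
      have hrep : (∑ m ∈ p.support, monomial m (coeff m p)) = p :=
        p.support_sum_monomial_coeff
      rw [← hrep]
      apply Submodule.sum_mem
      intro m _
      by_cases hm : ∑ j, m j ≤ N
      · apply Submodule.mem_sup_left
        have : (monomial m (coeff m p) : R) = (coeff m p) • monomial m (1:𝕜) := by
          rw [smul_monomial, smul_eq_mul, mul_one]
        rw [this]
        apply Submodule.smul_mem
        apply Submodule.subset_span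
        refine ⟨m, ?_, rfl⟩
        simp only [T, Finset.mem_coe, Finset.mem_Iic]
        intro j
        simp only [Finsupp.coe_equivFunOnFinite_symm]
        calc m j ≤ ∑ i, m i := Finset.single_le_sum (fun i _ => Nat.zero_le _) (Finset.mem_univ j)
          _ ≤ N := hm
      · apply Submodule.mem_sup_right
        exact hN (monomial_mem_mId_pow_s19 N m _ (by omega))
    rw [Submodule.mem_sup] at hp
    obtain ⟨v, hv, c, hc, hvc⟩ := hp
    exact ⟨v, hv, c, hc, hvc.symm⟩
  have hsurj : Function.Surjective
      (((Ideal.Quotient.mkₐ 𝕜 C).toLinearMap).comp V.subtype) := by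
    intro y
    obtain ⟨p, rfl⟩ := Ideal.Quotient.mk_surjective y
    obtain ⟨v, hv, c, hc, rfl⟩ := hsup p
    refine ⟨⟨v, hv⟩, ?_⟩
    simp only [LinearMap.comp_apply, Submodule.subtype_apply, AlgHom.toLinearMap_apply,
      Ideal.Quotient.mkₐ_eq_mk]
    rw [RingHom.map_add, Ideal.Quotient.eq_zero_iff_mem.mpr hc, add_zero]
  exact Module.Finite.of_surjective _ hsurj

lemma quotDim_self {𝕜 : Type*} [Field 𝕜] {R : Type*} [CommRing R] [Algebra 𝕜 R]
    (A : Ideal R) : quotDim 𝕜 A A = 0 := by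
  have h : Submodule.comap (Submodule.restrictScalars 𝕜 A).subtype
      (Submodule.restrictScalars 𝕜 A) = ⊤ := by
    ext x; simp [x.2]
  rw [quotDim, h]
  have : Subsingleton (↥(Submodule.restrictScalars 𝕜 A) ⧸
      (⊤ : Submodule 𝕜 ↥(Submodule.restrictScalars 𝕜 A))) :=
    Submodule.Quotient.subsingleton_iff.mpr rfl
  exact Module.finrank_zero_of_subsingleton

lemma rank_additivity {𝕜 : Type*} [Field 𝕜] {R : Type*} [CommRing R] [Algebra 𝕜 R]
    (A B : Ideal R) (hBA : B ≤ A) (hfd : FiniteDimensional 𝕜 (R ⧸ B)) :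
    Module.finrank 𝕜 (R ⧸ B) = quotDim 𝕜 A B + Module.finrank 𝕜 (R ⧸ A) := by
  classical
  set A' := Submodule.restrictScalars 𝕜 A with hA'
  set B' := Submodule.restrictScalars 𝕜 B with hB'
  have eB : (R ⧸ B') ≃ₗ[𝕜] (R ⧸ B) := Submodule.Quotient.restrictScalarsEquiv 𝕜 B
  have eA : (R ⧸ A') ≃ₗ[𝕜] (R ⧸ A) := Submodule.Quotient.restrictScalarsEquiv 𝕜 A
  have hfdB' : FiniteDimensional 𝕜 (R ⧸ B') := Module.Finite.equiv eB.symm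
  set Nmap : Submodule 𝕜 (R ⧸ B') := Submodule.map B'.mkQ A' with hN
  have e1 : (↥A' ⧸ Submodule.comap A'.subtype B') ≃ₗ[𝕜] ↥Nmap := by
    have hker : LinearMap.ker (B'.mkQ.comp A'.subtype) = Submodule.comap A'.subtype B' := by
      rw [LinearMap.ker_comp, Submodule.ker_mkQ]
    have hrange : LinearMap.range (B'.mkQ.comp A'.subtype) = Nmap := by
      rw [LinearMap.range_comp, Submodule.range_subtype]
    exact (Submodule.quotEquivOfEq _ _ hker.symm).trans
      ((B'.mkQ.comp A'.subtype).quotKerEquivRange.trans (LinearEquiv.ofEq _ _ hrange))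
  have e2 : ((R ⧸ B') ⧸ Nmap) ≃ₗ[𝕜] (R ⧸ A') :=
    Submodule.quotientQuotientEquivQuotient B' A' (fun x hx => hBA hx)
  have h3 := Submodule.finrank_quotient_add_finrank Nmap
  rw [e2.finrank_eq, eA.finrank_eq, ← e1.finrank_eq] at h3
  rw [← eB.finrank_eq, ← h3, quotDim]
  exact Nat.add_comm _ _

lemma funsupp_cons_eq {r : ℕ} (a : ℕ) (D : Fin r → ℕ) :
    Finsupp.equivFunOnFinite.symm (Fin.cons a D : Fin (r+1) → ℕ)
      = Finsupp.cons a (Finsupp.equivFunOnFinite.symm D) := by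
  ext j
  refine Fin.cases ?_ ?_ j
  · simp [Finsupp.cons_zero]
  · intro i; simp [Finsupp.cons_succ]
/-- **Compatibility of the two notions of mixed multiplicities in the `𝔪`-primary case.**
If the families `𝕁(1), …, 𝕁(r)` are moreover `𝔪`-primary, and `G, G', H` are the homogeneous
degree-`d` polynomials computing respectively
`lim_m dim_𝕜(𝐉_{m𝐧}/I_{mn₀}𝐉_{m𝐧})/m^d`, `lim_m dim_𝕜(R/I_{mn₀}𝐉_{m𝐧})/m^d` and
`lim_m dim_𝕜(R/𝐉_{m𝐧})/m^d`, then `G'(n₀,𝐧) = G(n₀,𝐧) + H(𝐧)` on `ℕ^{r+1}`.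
Consequently, for `(d₀,𝐝)` with `d₀+|𝐝| = d`: if `d₀ = 0` then
`e_{(0,𝐝)}(𝕀,𝕁(1),…,𝕁(r)) = e_𝐝(𝕁(1),…,𝕁(r))`, and if `d₀ > 0` then
`e_{(d₀,𝐝)}(𝕀,𝕁(1),…,𝕁(r)) = e_{(d₀−1,𝐝)}(𝕀|𝕁(1),…,𝕁(r))` (the mixed multiplicities being
the coefficients of `G', H, G` scaled by the corresponding factorials). -/
theorem statement19 {𝕜 : Type*} [Field 𝕜] (d r : ℕ) (hd : 0 < d)
    (I : ℕ → Ideal (MvPolynomial (Fin d) 𝕜))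
    (J : Fin r → ℕ → Ideal (MvPolynomial (Fin d) 𝕜)) (β : ℕ)
    (hI : IsGradedFamily I)
    (hImon : ∀ n, IsMonomialIdeal (I n))
    (hIprim : ∀ n, 0 < n → IsMPrimary (I n))
    (hJ : ∀ i, IsGradedFamily (J i))
    (hJb : ∀ i n, IsMonomialBounded (J i n) (β * n))
    (hJprim : ∀ i n, 0 < n → IsMPrimary (J i n))
    (G G' : MvPolynomial (Fin (r + 1)) ℝ) (H : MvPolynomial (Fin r) ℝ)
    (hGhom : G.IsHomogeneous d) (hG'hom : G'.IsHomogeneous d) (hHhom : H.IsHomogeneous d)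
    (hGlim : ∀ (n0 : ℕ) (n : Fin r → ℕ),
      Tendsto
        (fun m : ℕ =>
          (quotDim 𝕜 (∏ i, J i (m * n i)) (I (m * n0) * ∏ i, J i (m * n i)) : ℝ) /
            (m : ℝ) ^ d)
        atTop (nhds (MvPolynomial.eval (Fin.cons (n0 : ℝ) fun i => (n i : ℝ)) G)))
    (hG'lim : ∀ (n0 : ℕ) (n : Fin r → ℕ),
      Tendsto
        (fun m : ℕ =>
          (Module.finrank 𝕜
              (MvPolynomial (Fin d) 𝕜 ⧸ (I (m * n0) * ∏ i, J i (m * n i))) : ℝ) /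
            (m : ℝ) ^ d)
        atTop (nhds (MvPolynomial.eval (Fin.cons (n0 : ℝ) fun i => (n i : ℝ)) G')))
    (hHlim : ∀ n : Fin r → ℕ,
      Tendsto
        (fun m : ℕ =>
          (Module.finrank 𝕜 (MvPolynomial (Fin d) 𝕜 ⧸ (∏ i, J i (m * n i))) : ℝ) /
            (m : ℝ) ^ d)
        atTop (nhds (MvPolynomial.eval (fun i => (n i : ℝ)) H))) :
    (∀ (n0 : ℕ) (n : Fin r → ℕ),
      MvPolynomial.eval (Fin.cons (n0 : ℝ) fun i => (n i : ℝ)) G' =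
        MvPolynomial.eval (Fin.cons (n0 : ℝ) fun i => (n i : ℝ)) G +
          MvPolynomial.eval (fun i => (n i : ℝ)) H) ∧
    (∀ D : Fin r → ℕ, (∑ i, D i) = d →
      ((∏ i, Nat.factorial (D i) : ℕ) : ℝ) *
          G'.coeff (Finsupp.equivFunOnFinite.symm (Fin.cons 0 D)) =
        ((∏ i, Nat.factorial (D i) : ℕ) : ℝ) *
          H.coeff (Finsupp.equivFunOnFinite.symm D)) ∧
    (∀ (d0 : ℕ) (D : Fin r → ℕ), 0 < d0 → d0 + ∑ i, D i = d →
      ((Nat.factorial d0 * ∏ i, Nat.factorial (D i) : ℕ) : ℝ) *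
          G'.coeff (Finsupp.equivFunOnFinite.symm (Fin.cons d0 D)) =
        ((Nat.factorial d0 * ∏ i, Nat.factorial (D i) : ℕ) : ℝ) *
          G.coeff (Finsupp.equivFunOnFinite.symm (Fin.cons d0 D))) := by
  classical
  have hpowI : ∀ n : ℕ, ∃ k, mId 𝕜 d ^ k ≤ I n := by
    intro n
    rcases Nat.eq_zero_or_pos n with h | h
    · exact ⟨0, by rw [h, hI.1, pow_zero, Ideal.one_eq_top]⟩
    · exact (hIprim n h).2
  have hpowJ : ∀ i (n : ℕ), ∃ k, mId 𝕜 d ^ k ≤ J i n := by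
    intro i n
    rcases Nat.eq_zero_or_pos n with h | h
    · exact ⟨0, by rw [h, (hJ i).1, pow_zero, Ideal.one_eq_top]⟩
    · exact (hJprim i n h).2
  have hpowP : ∀ (m : ℕ) (n : Fin r → ℕ), ∃ k, mId 𝕜 d ^ k ≤ ∏ i, J i (m * n i) := by
    intro m n
    refine Finset.prod_induction _ (fun C => ∃ k, mId 𝕜 d ^ k ≤ C) ?_ ?_ ?_
    · rintro C D ⟨k1, h1⟩ ⟨k2, h2⟩
      exact ⟨k1 + k2, by rw [pow_add]; exact Ideal.mul_mono h1 h2⟩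
    · exact ⟨0, by rw [pow_zero]⟩
    · exact fun i _ => hpowJ i (m * n i)
  have key : ∀ (n0 : ℕ) (n : Fin r → ℕ),
      MvPolynomial.eval (Fin.cons (n0 : ℝ) fun i => (n i : ℝ)) G' =
        MvPolynomial.eval (Fin.cons (n0 : ℝ) fun i => (n i : ℝ)) G +
          MvPolynomial.eval (fun i => (n i : ℝ)) H := by
    intro n0 n
    have heq : ∀ m : ℕ,
        (quotDim 𝕜 (∏ i, J i (m * n i)) (I (m * n0) * ∏ i, J i (m * n i)) : ℝ) / (m : ℝ) ^ d
          + (Module.finrank 𝕜 (MvPolynomial (Fin d) 𝕜 ⧸ (∏ i, J i (m * n i))) : ℝ) / (m : ℝ) ^ d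
        = (Module.finrank 𝕜
            (MvPolynomial (Fin d) 𝕜 ⧸ (I (m * n0) * ∏ i, J i (m * n i))) : ℝ) / (m : ℝ) ^ d := by
      intro m
      obtain ⟨k0, hk0⟩ := hpowI (m * n0)
      obtain ⟨k1, hk1⟩ := hpowP m n
      have hfd : FiniteDimensional 𝕜
          (MvPolynomial (Fin d) 𝕜 ⧸ (I (m * n0) * ∏ i, J i (m * n i))) := by
        refine fd_of_pow_le _ (k0 + k1) ?_
        rw [pow_add]; exact Ideal.mul_mono hk0 hk1
      have hadd := rank_additivity (∏ i, J i (m * n i)) (I (m * n0) * ∏ i, J i (m * n i))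
        Ideal.mul_le_right hfd
      rw [hadd]
      push_cast
      ring
    have h2 := ((hGlim n0 n).add (hHlim n)).congr heq
    exact (tendsto_nhds_unique h2 (hG'lim n0 n)).symm
  have hGzero : ∀ n : Fin r → ℕ,
      MvPolynomial.eval (Fin.cons ((0 : ℕ) : ℝ) fun i => (n i : ℝ)) G = 0 := by
    intro n
    have hzero : ∀ m : ℕ,
        (quotDim 𝕜 (∏ i, J i (m * n i)) (I (m * 0) * ∏ i, J i (m * n i)) : ℝ) / (m : ℝ) ^ d
          = 0 := by
      intro m
      rw [Nat.mul_zero, hI.1, Ideal.top_mul, quotDim_self]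
      simp
    have h1 : Tendsto (fun _ : ℕ => (0 : ℝ)) atTop
        (nhds (MvPolynomial.eval (Fin.cons ((0:ℕ) : ℝ) fun i => (n i : ℝ)) G)) := by
      have := hGlim 0 n
      refine this.congr ?_
      intro m
      exact hzero m
    exact (tendsto_nhds_unique h1 tendsto_const_nhds)
  set Hr : MvPolynomial (Fin (r + 1)) ℝ := rename Fin.succ H with hHr
  have hHr_eval : ∀ (x0 : ℝ) (x : Fin r → ℝ),
      MvPolynomial.eval (Fin.cons x0 x) Hr = MvPolynomial.eval x H := by
    intro x0 x
    rw [hHr, eval_rename]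
    congr 1
  have hGG : G' = G + Hr := by
    have hv : G' - (G + Hr) = 0 := by
      apply aux_vanish
      intro n
      have hfun : (fun i => ((n i : ℕ) : ℝ))
          = Fin.cons ((n 0 : ℕ) : ℝ) (fun i => ((n i.succ : ℕ) : ℝ)) := by
        ext i
        refine Fin.cases ?_ ?_ i <;> simp
      rw [map_sub, map_add, hfun, hHr_eval, key (n 0) (fun i => n i.succ)]
      ring
    have := sub_eq_zero.mp hv
    exact this
  have hG0 : ∀ Df : Fin r →₀ ℕ, MvPolynomial.coeff (Finsupp.cons 0 Df) G = 0 := by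
    have hQ0 : (finSuccEquiv ℝ r G).coeff 0 = 0 := by
      apply aux_vanish
      intro n
      have h0 := hGzero n
      rw [Nat.cast_zero, eval_eq_eval_mv_eval',
        ← Polynomial.coeff_zero_eq_eval_zero, Polynomial.coeff_map] at h0
      exact h0
    intro Df
    rw [← finSuccEquiv_coeff_coeff, hQ0, MvPolynomial.coeff_zero]
  have hmd : ∀ u : Fin r →₀ ℕ, Finsupp.mapDomain Fin.succ u = Finsupp.cons 0 u := by
    intro u
    ext j
    refine Fin.cases ?_ ?_ j
    · rw [Finsupp.cons_zero, Finsupp.mapDomain_notin_range]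
      rintro ⟨i, hi⟩
      exact Fin.succ_ne_zero i hi
    · intro i
      rw [Finsupp.mapDomain_apply (Fin.succ_injective r), Finsupp.cons_succ]
  refine ⟨key, ?_, ?_⟩
  · intro D hD
    rw [funsupp_cons_eq, hGG, MvPolynomial.coeff_add, hG0, zero_add, hHr, ← hmd,
      coeff_rename_mapDomain _ (Fin.succ_injective r)]
  · intro d0 D hd0 hsum
    have hHr0 : MvPolynomial.coeff (Finsupp.cons d0 (Finsupp.equivFunOnFinite.symm D)) Hr = 0 := by
      rw [hHr]
      apply coeff_rename_eq_zero
      intro u hu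
      exfalso
      have h0 := congrArg (fun f : Fin (r+1) →₀ ℕ => f 0) hu
      beta_reduce at h0
      rw [Finsupp.mapDomain_notin_range, Finsupp.cons_zero] at h0
      · omega
      · rintro ⟨i, hi⟩
        exact Fin.succ_ne_zero i hi
    rw [funsupp_cons_eq, hGG, MvPolynomial.coeff_add, hHr0, add_zero]
end
end
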